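/- For any absolutely continuous function ψ : (0,∞) → ℝ with ψ(0⁺) = 0 and finite energy E(ψ) := (1/2)∫₀^∞ [ψ'(r)² + 2 sin²ψ(r)/r² + (ψ(r) − sin ψ(r) cos ψ(r))²/r⁴] r² dr ≤ M, one has the pointwise bound (1/2)(ψ(r)² − sin²ψ(r)) ≤ 2M for all r > 0. -/

import Mathlib

open Real Set MeasureTheory

theorem stmt2 (ψ ψ' : ℝ → ℝ) (M : ℝ)
    (hcont : ContinuousOn ψ (Set.Ici (0:ℝ))) (h0 : ψ 0 = 0)
    (hderiv : ∀ r ∈ Set.Ioi (0:ℝ), HasDerivAt ψ (ψ' r) r)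
    (hint : IntegrableOn (fun r : ℝ =>
      ((ψ' r)^2 + 2 * Real.sin (ψ r)^2 / r^2 +
        (ψ r - Real.sin (ψ r) * Real.cos (ψ r))^2 / r^4) * r^2) (Set.Ioi 0))
    (hE : (1/2) * ∫ r in Set.Ioi (0:ℝ),
      ((ψ' r)^2 + 2 * Real.sin (ψ r)^2 / r^2 +
        (ψ r - Real.sin (ψ r) * Real.cos (ψ r))^2 / r^4) * r^2 ≤ M) :
    ∀ r > 0, (1/2) * ((ψ r)^2 - Real.sin (ψ r)^2) ≤ 2 * M := by
  intro r hr
  set f : ℝ → ℝ := fun s =>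
      ((ψ' s)^2 + 2 * Real.sin (ψ s)^2 / s^2 +
        (ψ s - Real.sin (ψ s) * Real.cos (ψ s))^2 / s^4) * s^2 with hf
  set F : ℝ → ℝ := fun s => (1/2) * ((ψ s)^2 - Real.sin (ψ s)^2) with hF
  set F' : ℝ → ℝ := fun s => (ψ s - Real.sin (ψ s) * Real.cos (ψ s)) * ψ' s with hF'
  have hfnonneg : ∀ s : ℝ, 0 ≤ f s := by
    intro s
    have h1 : (0:ℝ) ≤ (ψ' s)^2 := sq_nonneg _
    have h2 : (0:ℝ) ≤ 2 * Real.sin (ψ s)^2 / s^2 := by positivity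
    have h3 : (0:ℝ) ≤ (ψ s - Real.sin (ψ s) * Real.cos (ψ s))^2 / s^4 := by positivity
    have : (0:ℝ) ≤ s^2 := sq_nonneg _
    simp only [hf]
    nlinarith
  -- derivative of F on (0, r)
  have hFderiv : ∀ s ∈ Set.Ioo (0:ℝ) r, HasDerivAt F (F' s) s := by
    intro s hs
    have hψd := hderiv s hs.1
    have h1 : HasDerivAt (fun x : ℝ => x^2) (2 * ψ s) (ψ s) := by
      simpa using (hasDerivAt_pow 2 (ψ s))
    have h2 : HasDerivAt (fun x : ℝ => Real.sin x ^ 2)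
        (2 * Real.sin (ψ s) * Real.cos (ψ s)) (ψ s) := by
      have := (Real.hasDerivAt_sin (ψ s)).fun_pow 2
      simpa [mul_comm, mul_assoc] using this
    have hg : HasDerivAt (fun x : ℝ => (1/2) * (x^2 - Real.sin x^2))
        (ψ s - Real.sin (ψ s) * Real.cos (ψ s)) (ψ s) := by
      have := (h1.sub h2).const_mul (1/2 : ℝ)
      exact this.congr_deriv (by ring)
    have := hg.comp s hψd
    simpa [hF, hF', Function.comp_def, mul_comm] using this
  -- continuity of F on [0, r]
  have hFcont : ContinuousOn F (Set.Icc 0 r) := by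
    have hψc : ContinuousOn ψ (Set.Icc 0 r) := hcont.mono (fun x hx => hx.1)
    fun_prop
  -- measurability of F' on Ioc 0 r
  have hψm : AEStronglyMeasurable ψ (volume.restrict (Set.Ioc 0 r)) :=
    (hcont.mono (fun x hx => le_of_lt hx.1)).aestronglyMeasurable measurableSet_Ioc
  have hψ'm : AEStronglyMeasurable ψ' (volume.restrict (Set.Ioc 0 r)) := by
    have h : ∀ s ∈ Set.Ioc (0:ℝ) r, deriv ψ s = ψ' s := fun s hs => (hderiv s hs.1).deriv
    exact (measurable_deriv ψ).aestronglyMeasurable.congr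
      (by filter_upwards [ae_restrict_mem measurableSet_Ioc] with s hs using h s hs)
  have hF'm : AEStronglyMeasurable F' (volume.restrict (Set.Ioc 0 r)) := by
    refine AEStronglyMeasurable.mul ?_ hψ'm
    exact hψm.sub ((Real.continuous_sin.comp_aestronglyMeasurable hψm).mul
      (Real.continuous_cos.comp_aestronglyMeasurable hψm))
  -- pointwise bound |F'| ≤ f on Ioc 0 r
  have hbound : ∀ s ∈ Set.Ioc (0:ℝ) r, |F' s| ≤ f s := by
    intro s hs
    have hs0 : (0:ℝ) < s := hs.1
    set a := ψ s - Real.sin (ψ s) * Real.cos (ψ s) with ha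
    have hfs : f s = (ψ' s)^2 * s^2 + 2 * Real.sin (ψ s)^2 + a^2 / s^2 := by
      simp only [hf, ha]
      field_simp
    have key : |a * ψ' s| ≤ (1/2) * (a^2 / s^2 + (ψ' s)^2 * s^2) := by
      have hsne : s ≠ 0 := ne_of_gt hs0
      have h1 : a^2 / s^2 = (a/s)^2 := by rw [div_pow]
      have h2 : a * ψ' s = (a/s) * (ψ' s * s) := by field_simp
      have h3 : (ψ' s)^2 * s^2 = (ψ' s * s)^2 := by ring
      rw [h1, h2, h3, abs_le]
      constructor
      · nlinarith [sq_nonneg (a/s + ψ' s * s)]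
      · nlinarith [sq_nonneg (a/s - ψ' s * s)]
    have hsin : (0:ℝ) ≤ 2 * Real.sin (ψ s)^2 := by positivity
    have h2 : (1/2:ℝ) * (a^2 / s^2 + (ψ' s)^2 * s^2) ≤ f s := by
      rw [hfs]
      have : (0:ℝ) ≤ a^2 / s^2 := by positivity
      have : (0:ℝ) ≤ (ψ' s)^2 * s^2 := by positivity
      nlinarith
    calc |F' s| = |a * ψ' s| := by rw [hF']
    _ ≤ (1/2) * (a^2 / s^2 + (ψ' s)^2 * s^2) := key
    _ ≤ f s := h2
  -- integrability of f and F' on Ioc 0 r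
  have hfint : IntegrableOn f (Set.Ioc 0 r) := hint.mono_set Set.Ioc_subset_Ioi_self
  have hF'int : IntegrableOn F' (Set.Ioc 0 r) := by
    refine Integrable.mono hfint hF'm ?_
    filter_upwards [ae_restrict_mem measurableSet_Ioc] with s hs
    rw [Real.norm_eq_abs, Real.norm_eq_abs, abs_of_nonneg (hfnonneg s)]
    exact hbound s hs
  -- FTC
  have hFTC : ∫ s in (0:ℝ)..r, F' s = F r - F 0 := by
    apply intervalIntegral.integral_eq_sub_of_hasDeriv_right_of_le (le_of_lt hr) hFcont
    · intro s hs
      exact (hFderiv s hs).hasDerivWithinAt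
    · rwa [intervalIntegrable_iff_integrableOn_Ioc_of_le (le_of_lt hr)]
  have hF0 : F 0 = 0 := by simp [hF, h0]
  have hIoc : ∫ s in (0:ℝ)..r, F' s = ∫ s in Set.Ioc (0:ℝ) r, F' s :=
    intervalIntegral.integral_of_le (le_of_lt hr)
  have hmono : ∫ s in Set.Ioc (0:ℝ) r, F' s ≤ ∫ s in Set.Ioc (0:ℝ) r, f s := by
    apply setIntegral_mono_on hF'int hfint measurableSet_Ioc
    intro s hs
    exact le_trans (le_abs_self _) (hbound s hs)
  have hmono2 : ∫ s in Set.Ioc (0:ℝ) r, f s ≤ ∫ s in Set.Ioi (0:ℝ), f s := by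
    apply setIntegral_mono_set hint
    · filter_upwards with s using hfnonneg s
    · exact HasSubset.Subset.eventuallyLE Set.Ioc_subset_Ioi_self
  have : F r ≤ ∫ s in Set.Ioi (0:ℝ), f s := by
    have hFr : F r = ∫ s in Set.Ioc (0:ℝ) r, F' s := by
      rw [← hIoc, hFTC, hF0, sub_zero]
    rw [hFr]
    exact le_trans hmono hmono2
  simp only [hF] at this
  linarith
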